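/- Let (v,ε) satisfy 1/3 + ε ≤ v ≤ 1/2 − ε and 0 < ε ≤ 1/12, and define g_{v,ε}(x,y) = (36/(1+8a))·( 1_{R1∪R4}(x,y) − 1_{R2∪R3}(x,y) ), where R1 = [v−ε,v)×[3/4,5/6], R2 = [v−ε,v)×[2/3,3/4), R3 = [v,v+ε]×[3/4,5/6], R4 = [v,v+ε]×[2/3,3/4), and a = 2ln(27/16). Then for every pair (p,q) with p ≤ q and (p,q) ∉ R1∪R2∪R3∪R4, the four integrals ∫∫_{[0,p]×[0,q]} g_{v,ε}, ∫∫_{[0,p]×[q,1]} g_{v,ε}, ∫∫_{[p,1]×[0,q]} g_{v,ε}, ∫∫_{[p,1]×[q,1]} g_{v,ε} all vanish. -/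

import Mathlib

open MeasureTheory Set

/-- The normalization constant a = 2·ln(27/16). -/
noncomputable def aNorm : ℝ := 2 * Real.log (27 / 16)

/-- The perturbation density g_{v,ε}. -/
noncomputable def gPert (v ε : ℝ) : ℝ × ℝ → ℝ := fun z =>
  (36 / (1 + 8 * aNorm)) *
    (((Set.Ico (v - ε) v ×ˢ Set.Icc (3/4:ℝ) (5/6))
        ∪ (Set.Icc v (v + ε) ×ˢ Set.Ico (2/3:ℝ) (3/4))).indicator (fun _ => (1:ℝ)) z
      - ((Set.Ico (v - ε) v ×ˢ Set.Ico (2/3:ℝ) (3/4))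
        ∪ (Set.Icc v (v + ε) ×ˢ Set.Icc (3/4:ℝ) (5/6))).indicator (fun _ => (1:ℝ)) z)

lemma box_integral (X Y S T : Set ℝ) (hX : MeasurableSet X) (hY : MeasurableSet Y)
    (hS : MeasurableSet S) (hT : MeasurableSet T) :
    ∫ z in S ×ˢ T, (X ×ˢ Y).indicator (fun _ => (1:ℝ)) z
      = (volume (X ∩ S)).toReal * (volume (Y ∩ T)).toReal := by
  have h1 : (∫ z in S ×ˢ T, (X ×ˢ Y).indicator (fun _ => (1:ℝ)) z)
      = ((volume.restrict (S ×ˢ T)) (X ×ˢ Y)).toReal := by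
    have := MeasureTheory.integral_indicator_one (μ := volume.restrict (S ×ˢ T)) (hX.prod hY)
    simpa [measureReal_def, Pi.one_def] using this
  rw [h1, Measure.restrict_apply (hX.prod hY), Set.prod_inter_prod]
  rw [MeasureTheory.Measure.volume_eq_prod, Measure.prod_prod, ENNReal.toReal_mul]

lemma box_integrableOn (X Y : Set ℝ) (W : Set (ℝ × ℝ)) (hX : MeasurableSet X)
    (hY : MeasurableSet Y) (hfin : volume (X ×ˢ Y) < ⊤) :
    IntegrableOn ((X ×ˢ Y).indicator (fun _ => (1:ℝ))) W := by
  have : Integrable ((X ×ˢ Y).indicator (fun _ => (1:ℝ))) volume := by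
    rw [integrable_indicator_iff (hX.prod hY)]
    exact integrableOn_const hfin.ne
  exact this.integrableOn

lemma gPert_box (v ε : ℝ) (hε : 0 < ε) (S T : Set ℝ)
    (hS : MeasurableSet S) (hT : MeasurableSet T) :
    ∫ z in S ×ˢ T, gPert v ε z
      = (36 / (1 + 8 * aNorm)) *
        (((volume (Ico (v - ε) v ∩ S)).toReal - (volume (Icc v (v + ε) ∩ S)).toReal) *
         ((volume (Icc (3/4:ℝ) (5/6) ∩ T)).toReal - (volume (Ico (2/3:ℝ) (3/4) ∩ T)).toReal)) := by
  have hdisjx : Disjoint (Ico (v - ε) v) (Icc v (v + ε)) := by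
    rw [Set.disjoint_left]
    rintro x ⟨_, hx2⟩ ⟨hx3, _⟩
    exact absurd hx3 (not_le.2 hx2)
  have hd1 : Disjoint (Ico (v - ε) v ×ˢ Icc (3/4:ℝ) (5/6)) (Icc v (v + ε) ×ˢ Ico (2/3:ℝ) (3/4)) := by
    rw [Set.disjoint_left]
    rintro ⟨x, y⟩ ⟨hx, _⟩ ⟨hx', _⟩
    exact Set.disjoint_left.1 hdisjx hx hx'
  have hd2 : Disjoint (Ico (v - ε) v ×ˢ Ico (2/3:ℝ) (3/4)) (Icc v (v + ε) ×ˢ Icc (3/4:ℝ) (5/6)) := by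
    rw [Set.disjoint_left]
    rintro ⟨x, y⟩ ⟨hx, _⟩ ⟨hx', _⟩
    exact Set.disjoint_left.1 hdisjx hx hx'
  have m1 : MeasurableSet (Ico (v - ε) v ×ˢ Icc (3/4:ℝ) (5/6)) :=
    measurableSet_Ico.prod measurableSet_Icc
  have m4 : MeasurableSet (Icc v (v + ε) ×ˢ Ico (2/3:ℝ) (3/4)) :=
    measurableSet_Icc.prod measurableSet_Ico
  have m2 : MeasurableSet (Ico (v - ε) v ×ˢ Ico (2/3:ℝ) (3/4)) :=
    measurableSet_Ico.prod measurableSet_Ico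
  have m3 : MeasurableSet (Icc v (v + ε) ×ˢ Icc (3/4:ℝ) (5/6)) :=
    measurableSet_Icc.prod measurableSet_Icc
  have vfin : ∀ X Y : Set ℝ, Bornology.IsBounded X → Bornology.IsBounded Y →
      volume (X ×ˢ Y) < ⊤ := by
    intro X Y hXb hYb
    exact (hXb.prod hYb).measure_lt_top
  have f1 : volume (Ico (v - ε) v ×ˢ Icc (3/4:ℝ) (5/6)) < ⊤ :=
    vfin _ _ (Metric.isBounded_Ico _ _) (Metric.isBounded_Icc _ _)
  have f4 : volume (Icc v (v + ε) ×ˢ Ico (2/3:ℝ) (3/4)) < ⊤ :=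
    vfin _ _ (Metric.isBounded_Icc _ _) (Metric.isBounded_Ico _ _)
  have f2 : volume (Ico (v - ε) v ×ˢ Ico (2/3:ℝ) (3/4)) < ⊤ :=
    vfin _ _ (Metric.isBounded_Ico _ _) (Metric.isBounded_Ico _ _)
  have f3 : volume (Icc v (v + ε) ×ˢ Icc (3/4:ℝ) (5/6)) < ⊤ :=
    vfin _ _ (Metric.isBounded_Icc _ _) (Metric.isBounded_Icc _ _)
  have i1 := box_integrableOn (Ico (v - ε) v) (Icc (3/4:ℝ) (5/6)) (S ×ˢ T)
    measurableSet_Ico measurableSet_Icc f1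
  have i4 := box_integrableOn (Icc v (v + ε)) (Ico (2/3:ℝ) (3/4)) (S ×ˢ T)
    measurableSet_Icc measurableSet_Ico f4
  have i2 := box_integrableOn (Ico (v - ε) v) (Ico (2/3:ℝ) (3/4)) (S ×ˢ T)
    measurableSet_Ico measurableSet_Ico f2
  have i3 := box_integrableOn (Icc v (v + ε)) (Icc (3/4:ℝ) (5/6)) (S ×ˢ T)
    measurableSet_Icc measurableSet_Icc f3
  have hg : ∀ z, gPert v ε z = (36 / (1 + 8 * aNorm)) *
      (((Ico (v - ε) v ×ˢ Icc (3/4:ℝ) (5/6)).indicator (fun _ => (1:ℝ)) z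
        + (Icc v (v + ε) ×ˢ Ico (2/3:ℝ) (3/4)).indicator (fun _ => (1:ℝ)) z)
       - ((Ico (v - ε) v ×ˢ Ico (2/3:ℝ) (3/4)).indicator (fun _ => (1:ℝ)) z
        + (Icc v (v + ε) ×ˢ Icc (3/4:ℝ) (5/6)).indicator (fun _ => (1:ℝ)) z)) := by
    intro z
    unfold gPert
    rw [Set.indicator_union_of_disjoint hd1, Set.indicator_union_of_disjoint hd2]
  calc ∫ z in S ×ˢ T, gPert v ε z
      = ∫ z in S ×ˢ T, (36 / (1 + 8 * aNorm)) *
          (((Ico (v - ε) v ×ˢ Icc (3/4:ℝ) (5/6)).indicator (fun _ => (1:ℝ)) z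
            + (Icc v (v + ε) ×ˢ Ico (2/3:ℝ) (3/4)).indicator (fun _ => (1:ℝ)) z)
           - ((Ico (v - ε) v ×ˢ Ico (2/3:ℝ) (3/4)).indicator (fun _ => (1:ℝ)) z
            + (Icc v (v + ε) ×ˢ Icc (3/4:ℝ) (5/6)).indicator (fun _ => (1:ℝ)) z)) := by
        exact setIntegral_congr_fun (hS.prod hT) (fun z _ => hg z)
    _ = (36 / (1 + 8 * aNorm)) *
          (((∫ z in S ×ˢ T, (Ico (v - ε) v ×ˢ Icc (3/4:ℝ) (5/6)).indicator (fun _ => (1:ℝ)) z)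
            + (∫ z in S ×ˢ T, (Icc v (v + ε) ×ˢ Ico (2/3:ℝ) (3/4)).indicator (fun _ => (1:ℝ)) z))
           - ((∫ z in S ×ˢ T, (Ico (v - ε) v ×ˢ Ico (2/3:ℝ) (3/4)).indicator (fun _ => (1:ℝ)) z)
            + (∫ z in S ×ˢ T, (Icc v (v + ε) ×ˢ Icc (3/4:ℝ) (5/6)).indicator (fun _ => (1:ℝ)) z))) := by
        have hsub := MeasureTheory.integral_sub (i1.add i4) (i2.add i3)
        have hadd1 := MeasureTheory.integral_add i1 i4
        have hadd2 := MeasureTheory.integral_add i2 i3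
        simp only [Pi.add_apply] at hsub
        rw [MeasureTheory.integral_const_mul, hsub, hadd1, hadd2]
    _ = (36 / (1 + 8 * aNorm)) *
          ((((volume (Ico (v - ε) v ∩ S)).toReal * (volume (Icc (3/4:ℝ) (5/6) ∩ T)).toReal)
            + ((volume (Icc v (v + ε) ∩ S)).toReal * (volume (Ico (2/3:ℝ) (3/4) ∩ T)).toReal))
           - (((volume (Ico (v - ε) v ∩ S)).toReal * (volume (Ico (2/3:ℝ) (3/4) ∩ T)).toReal)
            + ((volume (Icc v (v + ε) ∩ S)).toReal * (volume (Icc (3/4:ℝ) (5/6) ∩ T)).toReal))) := by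
        rw [box_integral (Ico (v - ε) v) (Icc (3/4:ℝ) (5/6)) S T measurableSet_Ico measurableSet_Icc hS hT,
          box_integral (Icc v (v + ε)) (Ico (2/3:ℝ) (3/4)) S T measurableSet_Icc measurableSet_Ico hS hT,
          box_integral (Ico (v - ε) v) (Ico (2/3:ℝ) (3/4)) S T measurableSet_Ico measurableSet_Ico hS hT,
          box_integral (Icc v (v + ε)) (Icc (3/4:ℝ) (5/6)) S T measurableSet_Icc measurableSet_Icc hS hT]
    _ = _ := by ring

/-- If (p,q) with p ≤ q avoids the four perturbation rectangles, then the integrals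
of g_{v,ε} over the four quadrant products determined by (p,q) all vanish. -/
theorem gPert_integrals_vanish
    (v ε : ℝ) (hε : 0 < ε) (hε12 : ε ≤ 1/12)
    (hv1 : 1/3 + ε ≤ v) (hv2 : v ≤ 1/2 - ε)
    (p q : ℝ) (hpq : p ≤ q)
    (hout : (p, q) ∉ (Set.Ico (v - ε) v ×ˢ Set.Icc (3/4:ℝ) (5/6))
        ∪ (Set.Ico (v - ε) v ×ˢ Set.Ico (2/3:ℝ) (3/4))
        ∪ (Set.Icc v (v + ε) ×ˢ Set.Icc (3/4:ℝ) (5/6))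
        ∪ (Set.Icc v (v + ε) ×ˢ Set.Ico (2/3:ℝ) (3/4))) :
    (∫ z in (Set.Icc (0:ℝ) p ×ˢ Set.Icc (0:ℝ) q), gPert v ε z) = 0 ∧
    (∫ z in (Set.Icc (0:ℝ) p ×ˢ Set.Icc q 1), gPert v ε z) = 0 ∧
    (∫ z in (Set.Icc p 1 ×ˢ Set.Icc (0:ℝ) q), gPert v ε z) = 0 ∧
    (∫ z in (Set.Icc p 1 ×ˢ Set.Icc q 1), gPert v ε z) = 0 := by
  -- Case split from hout
  have hcases : p < v - ε ∨ v + ε < p ∨ q < 2/3 ∨ 5/6 < q := by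
    by_contra hc
    push_neg at hc
    obtain ⟨h1, h2, h3, h4⟩ := hc
    apply hout
    rcases lt_or_ge p v with hp | hp
    · rcases lt_or_ge q (3/4) with hq | hq
      · exact Or.inl (Or.inl (Or.inr ⟨⟨h1, hp⟩, ⟨h3, hq⟩⟩))
      · exact Or.inl (Or.inl (Or.inl ⟨⟨h1, hp⟩, ⟨hq, h4⟩⟩))
    · rcases lt_or_ge q (3/4) with hq | hq
      · exact Or.inr ⟨⟨hp, h2⟩, ⟨h3, hq⟩⟩
      · exact Or.inl (Or.inr ⟨⟨hp, h2⟩, ⟨hq, h4⟩⟩)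
  -- interval length facts
  have hb1 : ∀ S : Set ℝ, Ico (v - ε) v ∩ S = Ico (v - ε) v →
      (volume (Ico (v - ε) v ∩ S)).toReal = ε := by
    intro S hSe
    rw [hSe, Real.volume_Ico, ENNReal.toReal_ofReal (by linarith)]
    ring
  have hb2 : ∀ S : Set ℝ, Icc v (v + ε) ∩ S = Icc v (v + ε) →
      (volume (Icc v (v + ε) ∩ S)).toReal = ε := by
    intro S hSe
    rw [hSe, Real.volume_Icc, ENNReal.toReal_ofReal (by linarith)]
    ring
  have hc1 : ∀ T : Set ℝ, Icc (3/4:ℝ) (5/6) ∩ T = Icc (3/4:ℝ) (5/6) →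
      (volume (Icc (3/4:ℝ) (5/6) ∩ T)).toReal = 1/12 := by
    intro T hTe
    rw [hTe, Real.volume_Icc, ENNReal.toReal_ofReal (by norm_num)]
    norm_num
  have hc2 : ∀ T : Set ℝ, Ico (2/3:ℝ) (3/4) ∩ T = Ico (2/3:ℝ) (3/4) →
      (volume (Ico (2/3:ℝ) (3/4) ∩ T)).toReal = 1/12 := by
    intro T hTe
    rw [hTe, Real.volume_Ico, ENNReal.toReal_ofReal (by norm_num)]
    norm_num
  have hzero : ∀ X S : Set ℝ, X ∩ S = ∅ → (volume (X ∩ S)).toReal = 0 := by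
    intro X S h; rw [h]; simp
  -- x-factor and y-factor
  set xfac : Set ℝ → ℝ := fun S =>
    (volume (Ico (v - ε) v ∩ S)).toReal - (volume (Icc v (v + ε) ∩ S)).toReal with hxfac
  set yfac : Set ℝ → ℝ := fun T =>
    (volume (Icc (3/4:ℝ) (5/6) ∩ T)).toReal - (volume (Ico (2/3:ℝ) (3/4) ∩ T)).toReal with hyfac
  have key : (∀ S : Set ℝ, S = Icc 0 p ∨ S = Icc p 1 → xfac S = 0) ∨
      (∀ T : Set ℝ, T = Icc 0 q ∨ T = Icc q 1 → yfac T = 0) := by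
    rcases hcases with h | h | h | h
    · left
      rintro S (rfl | rfl)
      · simp only [hxfac]
        rw [hzero _ _ (by
            apply eq_empty_iff_forall_notMem.2
            rintro x ⟨⟨hx1, _⟩, ⟨_, hx2⟩⟩; linarith),
          hzero _ _ (by
            apply eq_empty_iff_forall_notMem.2
            rintro x ⟨⟨hx1, _⟩, ⟨_, hx2⟩⟩; linarith)]
        ring
      · simp only [hxfac]
        rw [hb1 _ (inter_eq_left.2 (by intro x hx; obtain ⟨ha, hb⟩ := hx; exact ⟨by linarith, by linarith⟩)),
          hb2 _ (inter_eq_left.2 (by intro x hx; obtain ⟨ha, hb⟩ := hx; exact ⟨by linarith, by linarith⟩))]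
        ring
    · left
      rintro S (rfl | rfl)
      · simp only [hxfac]
        rw [hb1 _ (inter_eq_left.2 (by intro x hx; obtain ⟨ha, hb⟩ := hx; exact ⟨by linarith, by linarith⟩)),
          hb2 _ (inter_eq_left.2 (by intro x hx; obtain ⟨ha, hb⟩ := hx; exact ⟨by linarith, by linarith⟩))]
        ring
      · simp only [hxfac]
        rw [hzero _ _ (by
            apply eq_empty_iff_forall_notMem.2
            rintro x ⟨⟨_, hx1⟩, ⟨hx2, _⟩⟩; linarith),
          hzero _ _ (by
            apply eq_empty_iff_forall_notMem.2
            rintro x ⟨⟨_, hx1⟩, ⟨hx2, _⟩⟩; linarith)]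
        ring
    · right
      rintro T (rfl | rfl)
      · simp only [hyfac]
        rw [hzero _ _ (by
            apply eq_empty_iff_forall_notMem.2
            rintro x ⟨⟨hx1, _⟩, ⟨_, hx2⟩⟩; linarith),
          hzero _ _ (by
            apply eq_empty_iff_forall_notMem.2
            rintro x ⟨⟨hx1, _⟩, ⟨_, hx2⟩⟩; linarith)]
        ring
      · simp only [hyfac]
        rw [hc1 _ (inter_eq_left.2 (by intro x hx; obtain ⟨ha, hb⟩ := hx; exact ⟨by linarith, by linarith⟩)),
          hc2 _ (inter_eq_left.2 (by intro x hx; obtain ⟨ha, hb⟩ := hx; exact ⟨by linarith, by linarith⟩))]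
        ring
    · right
      rintro T (rfl | rfl)
      · simp only [hyfac]
        rw [hc1 _ (inter_eq_left.2 (by intro x hx; obtain ⟨ha, hb⟩ := hx; exact ⟨by linarith, by linarith⟩)),
          hc2 _ (inter_eq_left.2 (by intro x hx; obtain ⟨ha, hb⟩ := hx; exact ⟨by linarith, by linarith⟩))]
        ring
      · simp only [hyfac]
        rw [hzero _ _ (by
            apply eq_empty_iff_forall_notMem.2
            rintro x ⟨⟨_, hx1⟩, ⟨hx2, _⟩⟩; linarith),
          hzero _ _ (by
            apply eq_empty_iff_forall_notMem.2
            rintro x ⟨⟨_, hx1⟩, ⟨hx2, _⟩⟩; linarith)]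
        ring
  have main : ∀ S T : Set ℝ, MeasurableSet S → MeasurableSet T →
      (S = Icc 0 p ∨ S = Icc p 1) → (T = Icc 0 q ∨ T = Icc q 1) →
      (∫ z in S ×ˢ T, gPert v ε z) = 0 := by
    intro S T hS hT hSc hTc
    rw [gPert_box v ε hε S T hS hT]
    rcases key with hk | hk
    · rw [show ((volume (Ico (v - ε) v ∩ S)).toReal - (volume (Icc v (v + ε) ∩ S)).toReal) = xfac S from rfl,
        hk S hSc]
      ring
    · rw [show ((volume (Icc (3/4:ℝ) (5/6) ∩ T)).toReal - (volume (Ico (2/3:ℝ) (3/4) ∩ T)).toReal) = yfac T from rfl,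
        hk T hTc]
      ring
  exact ⟨main _ _ measurableSet_Icc measurableSet_Icc (Or.inl rfl) (Or.inl rfl),
    main _ _ measurableSet_Icc measurableSet_Icc (Or.inl rfl) (Or.inr rfl),
    main _ _ measurableSet_Icc measurableSet_Icc (Or.inr rfl) (Or.inl rfl),
    main _ _ measurableSet_Icc measurableSet_Icc (Or.inr rfl) (Or.inr rfl)⟩
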